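/- arXiv:2303.17825 — 2 statements merged into one kernel-verified Lean document; each statement's English description precedes it below -/
import Mathlib

section
/- Let X be a compact metric space with a finite positive Borel measure m, let w, f : X → ℝ be continuous with ‖w‖_∞ = M attained on a set where w·f > 0, and suppose the numbers b_n = ∫_X w^{2n+1} f dm are eventually positive. If for every ε ∈ (0, M) the set U_ε = {x : |w(x)| > M − ε} satisfies ∫_{U_ε} |f| dm > 0, and w·f > 0 on U_ε, and sup{|w(x)| : x ∉ V} < M where V = {x : w(x)f(x) > 0}, then lim_{n→∞} (∫_X w^{2n+1} f dm)^{1/(2n+1)} = M. -/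
open Real MeasureTheory Filter

/-- Abstract version of Proposition 2.4: on a compact metric space `X` with a finite
positive Borel measure `m`, for continuous `w, f` with `M = ‖w‖_∞`, under the stated
hypotheses the odd-power integrals satisfy
`lim_{n→∞} (∫ w^{2n+1} f dm)^{1/(2n+1)} = M`. -/
theorem stmt2 {X : Type*} [MetricSpace X] [CompactSpace X]
    [MeasurableSpace X] [BorelSpace X]
    (m : Measure X) [IsFiniteMeasure m]
    (w f : X → ℝ) (hw : Continuous w) (hf : Continuous f)
    (M : ℝ) (hM : M = ⨆ x, |w x|)
    (hpos : ∀ᶠ n : ℕ in atTop, 0 < ∫ x, (w x)^(2*n+1) * f x ∂m)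
    (hU : ∀ ε ∈ Set.Ioo (0:ℝ) M,
      (0 < ∫ x in {x | M - ε < |w x|}, |f x| ∂m) ∧
      ∀ x ∈ {x | M - ε < |w x|}, 0 < w x * f x)
    (hW : sSup ((fun x => |w x|) '' {x | ¬ 0 < w x * f x}) < M) :
    Tendsto (fun n : ℕ => (∫ x, (w x)^(2*n+1) * f x ∂m) ^ ((1:ℝ)/(2*n+1)))
      atTop (nhds M) := by
  set b : ℕ → ℝ := fun n => ∫ x, (w x)^(2*n+1) * f x ∂m with hbdef
  have hintg : ∀ n : ℕ, Integrable (fun x => (w x)^(2*n+1) * f x) m := fun n =>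
    ((hw.pow (2*n+1)).mul hf).integrable_of_hasCompactSupport
      (HasCompactSupport.of_compactSpace _)
  have hintf : Integrable (fun x => |f x|) m :=
    hf.abs.integrable_of_hasCompactSupport (HasCompactSupport.of_compactSpace _)
  have hbd : ∀ x, |w x| ≤ M := by
    intro x; rw [hM]
    exact le_ciSup ((isCompact_range hw.abs).bddAbove) x
  set K := sSup ((fun x => |w x|) '' {x | ¬ 0 < w x * f x}) with hKdef
  have hK0 : 0 ≤ K := Real.sSup_nonneg (by rintro y ⟨x, -, rfl⟩; exact abs_nonneg _)
  have hM0 : 0 < M := lt_of_le_of_lt hK0 hW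
  have hKle : ∀ x, ¬ 0 < w x * f x → |w x| ≤ K := by
    intro x hx
    refine le_csSup ⟨M, ?_⟩ ⟨x, hx, rfl⟩
    rintro y ⟨z, -, rfl⟩; exact hbd z
  set C := ∫ x, |f x| ∂m with hCdef
  have hC0 : 0 ≤ C := integral_nonneg fun x => abs_nonneg _
  have hub : ∀ n : ℕ, b n ≤ M^(2*n+1) * C := by
    intro n
    calc b n ≤ ∫ x, M^(2*n+1) * |f x| ∂m := by
          apply integral_mono (hintg n) (hintf.const_mul _)
          intro x
          calc (w x)^(2*n+1) * f x ≤ |(w x)^(2*n+1) * f x| := le_abs_self _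
            _ = |w x|^(2*n+1) * |f x| := by rw [abs_mul, abs_pow]
            _ ≤ M^(2*n+1) * |f x| :=
                mul_le_mul_of_nonneg_right
                  (pow_le_pow_left₀ (abs_nonneg _) (hbd x) _) (abs_nonneg _)
      _ = M^(2*n+1) * C := integral_const_mul _ _
  have hC : 0 < C := by
    obtain ⟨n, hn⟩ := hpos.exists
    by_contra h
    push_neg at h
    have hble : b n ≤ 0 :=
      (hub n).trans (mul_nonpos_of_nonneg_of_nonpos (pow_nonneg hM0.le _) h)
    exact absurd hn (not_lt.mpr hble)
  have hexp : Tendsto (fun n : ℕ => (1:ℝ)/(2*n+1)) atTop (nhds 0) := by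
    have h2 : Tendsto (fun n : ℕ => 2*n+1) atTop atTop :=
      tendsto_atTop_mono (fun n => by simp only [id_eq]; omega) tendsto_id
    have := (tendsto_one_div_atTop_nhds_zero_nat (𝕜 := ℝ)).comp h2
    refine this.congr fun n => ?_
    simp only [Function.comp]
    push_cast; ring
  have hone : ∀ a : ℝ, 0 < a →
      Tendsto (fun n : ℕ => a ^ ((1:ℝ)/(2*n+1))) atTop (nhds 1) := by
    intro a ha
    have := (Real.continuousAt_const_rpow (ne_of_gt ha)).tendsto.comp hexp
    simpa [Function.comp_def, Real.rpow_zero] using this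
  rw [Metric.tendsto_atTop]
  intro ε' hε'
  set ε := min (ε'/2) ((M-K)/2) with hεdef
  have hεhalf : ε ≤ ε'/2 := min_le_left _ _
  have hεK : ε ≤ (M-K)/2 := min_le_right _ _
  have hε : 0 < ε := lt_min (by linarith) (by linarith)
  have hεM : ε < M := by linarith
  have hKM : K < M - ε := by linarith
  have hMε : 0 < M - ε := by linarith
  set U := {x | M - ε < |w x|} with hUdef
  obtain ⟨hc, hsgn⟩ := hU ε ⟨hε, hεM⟩
  set c := ∫ x in U, |f x| ∂m with hcdef
  have hUmeas : MeasurableSet U := (isOpen_lt continuous_const hw.abs).measurableSet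
  have hlowU : ∀ n : ℕ, (M-ε)^(2*n+1) * c ≤ ∫ x in U, (w x)^(2*n+1) * f x ∂m := by
    intro n
    rw [hcdef, ← integral_const_mul]
    apply setIntegral_mono_on (hintf.const_mul _).integrableOn
      (hintg n).integrableOn hUmeas
    intro x hx
    have h1 : 0 < w x * f x := hsgn x hx
    have h2 : M - ε < |w x| := hx
    have habs : w x * f x = |w x| * |f x| := by
      rw [← abs_mul]; exact (abs_of_pos h1).symm
    have hwpow : (0:ℝ) ≤ (w x)^(2*n) := by
      rw [pow_mul]; exact pow_nonneg (sq_nonneg _) n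
    have hpow : (M-ε)^(2*n) ≤ (w x)^(2*n) := by
      have h3 : (M-ε)^(2*n) ≤ |w x|^(2*n) := pow_le_pow_left₀ hMε.le h2.le _
      rwa [pow_abs, abs_of_nonneg hwpow] at h3
    calc (M-ε)^(2*n+1) * |f x| = (M-ε)^(2*n) * ((M-ε) * |f x|) := by ring
      _ ≤ (w x)^(2*n) * (w x * f x) := by
          apply mul_le_mul hpow ?_ (mul_nonneg hMε.le (abs_nonneg _)) hwpow
          rw [habs]
          exact mul_le_mul_of_nonneg_right h2.le (abs_nonneg _)
      _ = (w x)^(2*n+1) * f x := by ring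
  have hlowc : ∀ n : ℕ, -(K^(2*n+1) * C) ≤ ∫ x in Uᶜ, (w x)^(2*n+1) * f x ∂m := by
    intro n
    have hpt : ∀ x, -(K^(2*n+1) * |f x|) ≤ (w x)^(2*n+1) * f x := by
      intro x
      by_cases hx : 0 < w x * f x
      · have hwpow : (0:ℝ) ≤ (w x)^(2*n) := by
          rw [pow_mul]; exact pow_nonneg (sq_nonneg _) n
        have h0 : 0 ≤ (w x)^(2*n+1) * f x := by
          have he : (w x)^(2*n+1) * f x = (w x)^(2*n) * (w x * f x) := by ring
          rw [he]; exact mul_nonneg hwpow hx.le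
        have h1 : 0 ≤ K^(2*n+1) * |f x| :=
          mul_nonneg (pow_nonneg hK0 _) (abs_nonneg _)
        linarith
      · have h1 : |w x| ≤ K := hKle x hx
        have h2 : |(w x)^(2*n+1) * f x| ≤ K^(2*n+1) * |f x| := by
          rw [abs_mul, abs_pow]
          exact mul_le_mul_of_nonneg_right
            (pow_le_pow_left₀ (abs_nonneg _) h1 _) (abs_nonneg _)
        linarith [neg_abs_le ((w x)^(2*n+1) * f x)]
    have hle : ∫ x in Uᶜ, |f x| ∂m ≤ C :=
      setIntegral_le_integral hintf (ae_of_all _ fun x => abs_nonneg _)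
    have hKp : (0:ℝ) ≤ K^(2*n+1) := pow_nonneg hK0 _
    calc -(K^(2*n+1) * C) ≤ -(K^(2*n+1) * ∫ x in Uᶜ, |f x| ∂m) := by nlinarith
      _ = ∫ x in Uᶜ, -(K^(2*n+1) * |f x|) ∂m := by
          rw [integral_neg, integral_const_mul]
      _ ≤ ∫ x in Uᶜ, (w x)^(2*n+1) * f x ∂m :=
          setIntegral_mono_on ((hintf.const_mul _).neg).integrableOn
            (hintg n).integrableOn hUmeas.compl fun x _ => hpt x
  have hsplit : ∀ n : ℕ, b n = (∫ x in U, (w x)^(2*n+1) * f x ∂m)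
      + ∫ x in Uᶜ, (w x)^(2*n+1) * f x ∂m :=
    fun n => (integral_add_compl hUmeas (hintg n)).symm
  have hr : K/(M-ε) < 1 := (div_lt_one hMε).mpr hKM
  have hr0 : 0 ≤ K/(M-ε) := div_nonneg hK0 hMε.le
  have hgeo : Tendsto (fun n : ℕ => (K/(M-ε))^(2*n+1) * C) atTop (nhds 0) := by
    have h2 : Tendsto (fun n : ℕ => 2*n+1) atTop atTop :=
      tendsto_atTop_mono (fun n => by simp only [id_eq]; omega) tendsto_id
    have := ((tendsto_pow_atTop_nhds_zero_of_lt_one hr0 hr).comp h2).mul_const C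
    simpa [Function.comp] using this
  have hev1 : ∀ᶠ n : ℕ in atTop, K^(2*n+1) * C ≤ (c/2) * (M-ε)^(2*n+1) := by
    filter_upwards [hgeo.eventually_lt_const (by linarith : (0:ℝ) < c/2)] with n hn
    have hcancel : (K/(M-ε))^(2*n+1) * (M-ε)^(2*n+1) = K^(2*n+1) := by
      rw [div_pow, div_mul_cancel₀]
      exact (pow_pos hMε (2*n+1)).ne'
    calc K^(2*n+1) * C = ((K/(M-ε))^(2*n+1) * C) * (M-ε)^(2*n+1) := by
          rw [← hcancel]; ring
      _ ≤ (c/2) * (M-ε)^(2*n+1) :=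
          mul_le_mul_of_nonneg_right hn.le (pow_pos hMε _).le
  have hev2 : ∀ᶠ n : ℕ in atTop, (M-ε)^(2*n+1) * (c/2) ≤ b n := by
    filter_upwards [hev1] with n hn
    have h1 := hlowU n
    have h2 := hlowc n
    have h3 := hsplit n
    nlinarith
  have hsle : ∀ᶠ n : ℕ in atTop,
      (M-ε) * (c/2)^((1:ℝ)/(2*n+1)) ≤ b n ^ ((1:ℝ)/(2*n+1)) ∧
      b n ^ ((1:ℝ)/(2*n+1)) ≤ M * C^((1:ℝ)/(2*n+1)) := by
    filter_upwards [hev2, hpos] with n h1 h2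
    have hk : ((2*n+1 : ℕ):ℝ) = 2*(n:ℝ)+1 := by push_cast; ring
    have hkpos : (0:ℝ) < 2*(n:ℝ)+1 := by positivity
    have hexp0 : (0:ℝ) ≤ 1/(2*(n:ℝ)+1) := by positivity
    constructor
    · have hmono := Real.rpow_le_rpow
        (mul_nonneg (pow_pos hMε _).le (by linarith : (0:ℝ) ≤ c/2)) h1 hexp0
      refine le_trans (le_of_eq ?_) hmono
      rw [Real.mul_rpow (pow_pos hMε _).le (by linarith : (0:ℝ) ≤ c/2)]
      congr 1
      rw [← Real.rpow_natCast (M-ε) (2*n+1), ← Real.rpow_mul hMε.le, hk,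
        mul_one_div, div_self hkpos.ne', Real.rpow_one]
    · have hmono := Real.rpow_le_rpow h2.le (hub n) hexp0
      refine hmono.trans (le_of_eq ?_)
      rw [Real.mul_rpow (pow_nonneg hM0.le _) hC0]
      congr 1
      rw [← Real.rpow_natCast M (2*n+1), ← Real.rpow_mul hM0.le, hk,
        mul_one_div, div_self hkpos.ne', Real.rpow_one]
  have hA : Tendsto (fun n : ℕ => M * C^((1:ℝ)/(2*n+1))) atTop (nhds M) := by
    have := (hone C hC).const_mul M
    simpa using this
  have hB : Tendsto (fun n : ℕ => (M-ε) * (c/2)^((1:ℝ)/(2*n+1))) atTop (nhds (M-ε)) := by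
    have := (hone (c/2) (by linarith)).const_mul (M-ε)
    simpa using this
  have hevUp : ∀ᶠ n : ℕ in atTop, M * C^((1:ℝ)/(2*n+1)) < M + ε' :=
    hA.eventually_lt_const (by linarith)
  have hevLo : ∀ᶠ n : ℕ in atTop, M - ε' < (M-ε) * (c/2)^((1:ℝ)/(2*n+1)) :=
    hB.eventually_const_lt (by linarith)
  have hfin : ∀ᶠ n : ℕ in atTop, dist (b n ^ ((1:ℝ)/(2*n+1))) M < ε' := by
    filter_upwards [hsle, hevUp, hevLo] with n hn h3 h4
    obtain ⟨h1, h2⟩ := hn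
    rw [Real.dist_eq, abs_lt]
    constructor <;> linarith
  exact eventually_atTop.mp hfin
end

section
/- For fixed g ≥ 3, with b_{2n+1} = ∫_{[0,π]^g} w₁^{2n+1} ((1/6)w₁³ − (1/2)w₁w₂ + (1/3)w₃ − w₁) dm_g, where dm_g = (1/(g!·π^g)) ∏_{i<j}(2cosθ_i − 2cosθ_j)² ∏_i 2sin²θ_i dθ₁…dθ_g and w_k = Σ_j 2cos(kθ_j), one has lim_{n→∞} b_{2n+1}^{1/(2n+1)} = 2g. -/
open Real MeasureTheory Filter Finset

set_option maxHeartbeats 4000000 in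
/-- For fixed `g ≥ 3`, with
`b_{2n+1} = ∫_{[0,π]^g} w₁^{2n+1}((1/6)w₁³ − (1/2)w₁w₂ + (1/3)w₃ − w₁) dm_g`,
where `dm_g` has density `(1/(g!π^g)) ∏_{i<j}(2cosθ_i − 2cosθ_j)² ∏_i 2sin²θ_i`
with respect to Lebesgue measure, one has `lim_{n→∞} b_{2n+1}^{1/(2n+1)} = 2g`. -/
theorem stmt3 (g : ℕ) (hg : 3 ≤ g)
    (w : ℕ → (Fin g → ℝ) → ℝ)
    (hw : ∀ k θ, w k θ = ∑ j, 2 * Real.cos (k * θ j))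
    (dens : (Fin g → ℝ) → ℝ)
    (hdens : ∀ θ, dens θ = (1 / ((Nat.factorial g : ℝ) * Real.pi ^ g)) *
        (∏ i, ∏ j ∈ Finset.univ.filter (fun j => i < j),
          (2 * Real.cos (θ i) - 2 * Real.cos (θ j))^2) *
        ∏ i, 2 * Real.sin (θ i)^2)
    (b : ℕ → ℝ)
    (hb : ∀ n, b n = ∫ θ in Set.univ.pi (fun _ : Fin g => Set.Icc (0:ℝ) Real.pi),
        (w 1 θ)^(2*n+1) *
          ((1/6)*(w 1 θ)^3 - (1/2)*(w 1 θ)*(w 2 θ) + (1/3)*(w 3 θ) - w 1 θ) * dens θ) :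
    Tendsto (fun n : ℕ => (b n) ^ ((1:ℝ)/(2*n+1))) atTop (nhds (2*g)) := by
  have hgR : (3:ℝ) ≤ (g:ℝ) := by exact_mod_cast hg
  have hgpos : (0:ℝ) < g := by linarith
  set Ω : Set (Fin g → ℝ) := Set.univ.pi fun _ : Fin g => Set.Icc (0:ℝ) π with hΩdef
  obtain ⟨F, hFdef⟩ : ∃ F : (Fin g → ℝ) → ℝ, F = fun θ =>
    (1/6)*(w 1 θ)^3 - (1/2)*(w 1 θ)*(w 2 θ) + (1/3)*(w 3 θ) - w 1 θ := ⟨_, rfl⟩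
  have hΩc : IsCompact Ω := isCompact_univ_pi fun _ => isCompact_Icc
  have hΩm : MeasurableSet Ω := hΩc.isClosed.measurableSet
  have hΩvol : volume Ω ≠ ⊤ := hΩc.measure_lt_top.ne
  -- continuity
  have hwc : ∀ k, Continuous (w k) := by
    intro k
    have : w k = fun θ => ∑ j, 2 * Real.cos (k * θ j) := funext (hw k)
    rw [this]; fun_prop
  have hFc : Continuous F := by
    rw [hFdef]
    exact (((continuous_const.mul (((hwc 1).pow 3))).sub
      ((continuous_const.mul (hwc 1)).mul (hwc 2))).add
      (continuous_const.mul (hwc 3))).sub (hwc 1)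
  have hdc : Continuous dens := by
    have : dens = fun θ => (1 / ((Nat.factorial g : ℝ) * Real.pi ^ g)) *
        (∏ i, ∏ j ∈ Finset.univ.filter (fun j => i < j),
          (2 * Real.cos (θ i) - 2 * Real.cos (θ j))^2) *
        ∏ i, 2 * Real.sin (θ i)^2 := funext hdens
    rw [this]; fun_prop
  have hdnn : ∀ θ, 0 ≤ dens θ := by
    intro θ; rw [hdens]; positivity
  -- bound on w 1
  have hW1le : ∀ θ, |w 1 θ| ≤ 2*g := by
    intro θ
    rw [hw]
    calc |∑ j, 2 * Real.cos ((1:ℕ) * θ j)| ≤ ∑ j, |2 * Real.cos ((1:ℕ) * θ j)| :=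
          Finset.abs_sum_le_sum_abs _ _
      _ ≤ ∑ _j : Fin g, 2 := Finset.sum_le_sum (fun j _ => by
          rw [abs_mul, abs_two]
          nlinarith [abs_cos_le_one ((1:ℕ) * θ j), abs_nonneg (Real.cos ((1:ℕ)*θ j))])
      _ = 2*g := by simp [mul_comm]
  have hW1lb : ∀ θ (η₂ : ℝ), 0 ≤ η₂ → η₂ ≤ π → (∀ j, θ j ∈ Set.Icc (0:ℝ) η₂) →
      2*g*Real.cos η₂ ≤ w 1 θ := by
    intro θ η₂ h0 hπ hmem
    rw [hw]
    calc 2*(g:ℝ)*Real.cos η₂ = ∑ _j : Fin g, 2 * Real.cos η₂ := by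
          simp [Finset.sum_const]; ring
      _ ≤ ∑ j, 2 * Real.cos ((1:ℕ) * θ j) := Finset.sum_le_sum (fun j _ => by
          have h1 := (hmem j).1; have h2 := (hmem j).2
          have := Real.cos_le_cos_of_nonneg_of_le_pi h1 hπ h2
          simpa using this)
  -- value of F at corners
  obtain ⟨F₀, hF₀def⟩ : ∃ x : ℝ, x = (4/3)*(g:ℝ)^3 - 2*(g:ℝ)^2 - (4/3)*(g:ℝ) := ⟨_, rfl⟩
  have hF₀pos : 0 < F₀ := by rw [hF₀def]; nlinarith
  have hwk0 : ∀ k : ℕ, w k (fun _ => 0) = 2*g := by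
    intro k; rw [hw]; simp [mul_comm]
  have hF0 : F (fun _ => 0) = F₀ := by
    simp only [hFdef, hwk0 1, hwk0 2, hwk0 3, hF₀def]; ring
  have hwkπ : ∀ k : ℕ, w k (fun _ => π) = 2*g*Real.cos (k*π) := by
    intro k; rw [hw]; simp [Finset.sum_const]; ring
  have hFπ : F (fun _ => π) = -F₀ := by
    have h1 : Real.cos ((1:ℕ)*π) = -1 := by simp
    have h2 : Real.cos ((2:ℕ)*π) = 1 := by
      rw [show ((2:ℕ):ℝ)*π = 2*π by push_cast; ring, Real.cos_two_pi]
    have h3 : Real.cos ((3:ℕ)*π) = -1 := by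
      rw [show ((3:ℕ):ℝ)*π = π + 2*π by push_cast; ring, Real.cos_add_two_pi, Real.cos_pi]
    simp only [hFdef, hwkπ 1, hwkπ 2, hwkπ 3, h1, h2, h3, hF₀def]; ring
  -- small eta with F controlled near corners
  obtain ⟨η, hη0, hηle, hFpos, hFneg⟩ :
      ∃ η : ℝ, 0 < η ∧ η ≤ π/2 ∧
        (∀ θ, (∀ j, θ j ∈ Set.Icc (0:ℝ) η) → F₀/2 ≤ F θ) ∧
        (∀ θ, (∀ j, θ j ∈ Set.Icc (π - η) π) → F θ ≤ -(F₀/2)) := by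
    obtain ⟨δ₀, hδ₀, h0⟩ := Metric.continuousAt_iff.1 (hFc.continuousAt (x := fun _ => 0))
      (F₀/2) (by positivity)
    obtain ⟨δπ, hδπ, hπc⟩ := Metric.continuousAt_iff.1 (hFc.continuousAt (x := fun _ => π))
      (F₀/2) (by positivity)
    refine ⟨min (π/2) (min δ₀ δπ / 2), by positivity, min_le_left _ _, ?_, ?_⟩
    · intro θ hθ
      have hd : dist θ (fun _ => 0) < δ₀ := by
        rw [dist_pi_lt_iff hδ₀]
        intro j
        have h1 := (hθ j).1; have h2 := (hθ j).2
        rw [Real.dist_eq, sub_zero, abs_of_nonneg h1]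
        calc θ j ≤ min (π/2) (min δ₀ δπ / 2) := h2
          _ ≤ min δ₀ δπ / 2 := min_le_right _ _
          _ < δ₀ := by have := min_le_left δ₀ δπ; linarith
      have := h0 hd
      rw [Real.dist_eq, hF0, abs_sub_lt_iff] at this
      linarith [this.2]
    · intro θ hθ
      have hd : dist θ (fun _ => π) < δπ := by
        rw [dist_pi_lt_iff hδπ]
        intro j
        have h1 := (hθ j).1; have h2 := (hθ j).2
        rw [Real.dist_eq, abs_of_nonpos (by linarith)]
        calc -(θ j - π) = π - θ j := by ring
          _ ≤ min (π/2) (min δ₀ δπ / 2) := by linarith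
          _ ≤ min δ₀ δπ / 2 := min_le_right _ _
          _ < δπ := by have := min_le_right δ₀ δπ; linarith
      have := hπc hd
      rw [Real.dist_eq, hFπ, abs_sub_lt_iff] at this
      linarith [this.1]
  obtain ⟨δ, hδdef⟩ : ∃ x : ℝ, x = 2*(1 - Real.cos η) := ⟨_, rfl⟩
  have hδpos : 0 < δ := by
    have h2 : Real.cos η < Real.cos 0 :=
      Real.strictAntiOn_cos ⟨le_refl 0, Real.pi_pos.le⟩
        ⟨hη0.le, by linarith [Real.pi_pos]⟩ hη0
    rw [Real.cos_zero] at h2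
    rw [hδdef]; linarith
  have hδlt : δ < 2*g := by
    have := Real.neg_one_le_cos η
    rw [hδdef]; nlinarith
  obtain ⟨ρ, hρdef⟩ : ∃ x : ℝ, x = 2*(g:ℝ) - δ := ⟨_, rfl⟩
  have hρpos : 0 < ρ := by rw [hρdef]; linarith
  have hρlt : ρ < 2*g := by rw [hρdef]; linarith
  -- threshold implications
  have hmemΩ : ∀ θ, θ ∈ Ω → ∀ j, θ j ∈ Set.Icc (0:ℝ) π := by
    intro θ hθ j
    exact (Set.mem_univ_pi.1 hθ) j
  have hsum_rest : ∀ (θ : Fin g → ℝ) (j : Fin g),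
      w 1 θ = 2 * Real.cos (θ j) + ∑ i ∈ Finset.univ.erase j, 2 * Real.cos (θ i) := by
    intro θ j
    rw [hw]
    simp only [Nat.cast_one, one_mul]
    exact (Finset.add_sum_erase _ _ (Finset.mem_univ j)).symm
  have hrest_le : ∀ (θ : Fin g → ℝ), (∀ i, θ i ∈ Set.Icc (0:ℝ) π) → ∀ j,
      |∑ i ∈ Finset.univ.erase j, 2 * Real.cos (θ i)| ≤ 2*(g-1) := by
    intro θ hθ j
    calc |∑ i ∈ Finset.univ.erase j, 2 * Real.cos (θ i)|
        ≤ ∑ i ∈ Finset.univ.erase j, |2 * Real.cos (θ i)| := Finset.abs_sum_le_sum_abs _ _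
      _ ≤ ∑ _i ∈ Finset.univ.erase j, 2 := Finset.sum_le_sum (fun i _ => by
          rw [abs_mul, abs_two]
          nlinarith [abs_cos_le_one (θ i), abs_nonneg (Real.cos (θ i))])
      _ = 2*(g-1) := by
          rw [Finset.sum_const, Finset.card_erase_of_mem (Finset.mem_univ j)]
          simp
          have : (1:ℕ) ≤ g := by omega
          push_cast [Nat.cast_sub this]
          ring
  have hThr : ∀ θ ∈ Ω, ρ ≤ w 1 θ → ∀ j, θ j ≤ η := by
    intro θ hθ hρw j
    have hm := hmemΩ θ hθ
    have hsum := hsum_rest θ j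
    have hr := (abs_le.1 (hrest_le θ hm j)).2
    have hcos : Real.cos η ≤ Real.cos (θ j) := by
      have : 2 * Real.cos (θ j) ≥ ρ - 2*((g:ℝ)-1) := by
        rw [hsum] at hρw; linarith
      rw [hρdef, hδdef] at this
      linarith
    by_contra hc
    push_neg at hc
    have := Real.strictAntiOn_cos ⟨hη0.le, by linarith [Real.pi_pos]⟩ (hm j) hc
    linarith
  have hThr' : ∀ θ ∈ Ω, w 1 θ ≤ -ρ → ∀ j, π - η ≤ θ j := by
    intro θ hθ hρw j
    have hm := hmemΩ θ hθ
    have hsum := hsum_rest θ j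
    have hr := (abs_le.1 (hrest_le θ hm j)).1
    have hcos : Real.cos (θ j) ≤ Real.cos (π - η) := by
      rw [Real.cos_pi_sub]
      have : 2 * Real.cos (θ j) ≤ -ρ + 2*((g:ℝ)-1) := by
        rw [hsum] at hρw; linarith
      rw [hρdef, hδdef] at this
      linarith
    by_contra hc
    push_neg at hc
    have hmem2 : π - η ∈ Set.Icc (0:ℝ) π := ⟨by linarith [Real.pi_pos], by linarith⟩
    have := Real.strictAntiOn_cos (hm j) hmem2 hc
    linarith
  -- nonnegativity of integrand on the outer region
  have hfGnn : ∀ (n : ℕ) θ, θ ∈ Ω → ρ ≤ |w 1 θ| →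
      0 ≤ (w 1 θ)^(2*n+1) * F θ * dens θ := by
    intro n θ hθ habs
    have hm := hmemΩ θ hθ
    rcases le_abs.1 habs with hpos | hneg
    · have hF : F₀/2 ≤ F θ := hFpos θ (fun j => ⟨(hm j).1, hThr θ hθ hpos j⟩)
      have h1 : 0 ≤ (w 1 θ)^(2*n+1) := pow_nonneg (by linarith) _
      have h2 : (0:ℝ) ≤ F₀/2 := by linarith
      exact mul_nonneg (mul_nonneg h1 (le_trans h2 hF)) (hdnn θ)
    · have hw1 : w 1 θ ≤ -ρ := by linarith
      have hF : F θ ≤ -(F₀/2) := hFneg θ (fun j => ⟨hThr' θ hθ hw1 j, (hm j).2⟩)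
      have h1 : (w 1 θ)^(2*n+1) ≤ 0 :=
        Odd.pow_nonpos (odd_two_mul_add_one n) (by linarith)
      have h2 : F θ ≤ 0 := by
        have : (0:ℝ) ≤ F₀/2 := by linarith
        linarith
      exact mul_nonneg (mul_nonneg_iff.2 (Or.inr ⟨h1, h2⟩)) (hdnn θ)
  -- uniform bound on F * dens
  have hΩne : Ω.Nonempty := ⟨(fun _ => 0), Set.mem_univ_pi.2 (fun j => ⟨le_refl 0, Real.pi_pos.le⟩)⟩
  obtain ⟨C, hC0, hCb⟩ : ∃ C : ℝ, 0 ≤ C ∧ ∀ θ ∈ Ω, |F θ * dens θ| ≤ C := by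
    obtain ⟨θC, hθC, hmax⟩ := hΩc.exists_isMaxOn hΩne ((hFc.mul hdc).abs.continuousOn)
    exact ⟨|F θC * dens θC|, abs_nonneg _, fun θ hθ => hmax hθ⟩
  obtain ⟨V, hVdef⟩ : ∃ x : ℝ, x = (volume Ω).toReal := ⟨_, rfl⟩
  have hV0 : 0 ≤ V := hVdef ▸ ENNReal.toReal_nonneg
  obtain ⟨K₂, hK₂def⟩ : ∃ x : ℝ, x = C*V + 1 := ⟨_, rfl⟩
  have hK₂pos : 0 < K₂ := by rw [hK₂def]; positivity
  -- integrability
  have hInt : ∀ (n : ℕ) (s : Set (Fin g → ℝ)), s ⊆ Ω →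
      IntegrableOn (fun θ => (w 1 θ)^(2*n+1) * F θ * dens θ) s volume := by
    intro n s hs
    exact (((((hwc 1).pow _).mul hFc).mul hdc).continuousOn.integrableOn_compact hΩc).mono_set hs
  -- upper bound
  have hbn : ∀ n : ℕ, b n = ∫ θ in Ω, (w 1 θ)^(2*n+1) * F θ * dens θ := by
    intro n; rw [hb]; simp only [hFdef]
  have hUpper : ∀ n : ℕ, b n ≤ (2*g)^(2*n+1) * K₂ := by
    intro n
    have hbound : ∀ θ ∈ Ω, ‖(w 1 θ)^(2*n+1) * F θ * dens θ‖ ≤ (2*g)^(2*n+1) * C := by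
      intro θ hθ
      rw [Real.norm_eq_abs, mul_assoc, abs_mul, abs_pow]
      exact mul_le_mul (pow_le_pow_left₀ (abs_nonneg _) (hW1le θ) _) (hCb θ hθ)
        (abs_nonneg _) (by positivity)
    have hnorm := norm_setIntegral_le_of_norm_le_const (μ := volume) (s := Ω)
      hΩc.measure_lt_top hbound
    rw [Real.norm_eq_abs, ← hbn n, measureReal_def, ← hVdef] at hnorm
    have h2 : (2*(g:ℝ))^(2*n+1) * C * V ≤ (2*g)^(2*n+1) * K₂ := by
      have h3 : C * V ≤ K₂ := by rw [hK₂def]; linarith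
      have h4 : (0:ℝ) ≤ (2*(g:ℝ))^(2*n+1) := by positivity
      nlinarith
    calc b n ≤ |b n| := le_abs_self _
      _ ≤ (2*(g:ℝ))^(2*n+1) * C * V := hnorm
      _ ≤ _ := h2
  -- key lower bound
  obtain ⟨G, hGdef⟩ : ∃ G : Set (Fin g → ℝ), G = {θ | ρ ≤ |w 1 θ|} := ⟨_, rfl⟩
  have hGm : MeasurableSet G := by
    rw [hGdef]
    exact (isClosed_le continuous_const ((hwc 1).abs)).measurableSet
  have hKey : ∀ t : ℝ, ρ < t → t < 2*g →
      ∃ K₁ : ℝ, 0 < K₁ ∧ ∀ n : ℕ, t^(2*n+1) * K₁ - ρ^(2*n+1) * K₂ ≤ b n := by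
    intro t hρt ht2g
    have ht0 : 0 < t := lt_trans hρpos hρt
    -- choose η₂ with cos η₂ large
    obtain ⟨η₂, hη₂0, hη₂le, hcosη₂⟩ : ∃ η₂ : ℝ, 0 < η₂ ∧ η₂ ≤ η ∧ t ≤ 2*g*Real.cos η₂ := by
      obtain ⟨d, hd0, hcd⟩ := Metric.continuousAt_iff.1
        (Real.continuous_cos.continuousAt (x := 0)) ((2*g - t)/(2*g))
        (div_pos (by linarith) (by positivity))
      refine ⟨min η (d/2), by positivity, min_le_left _ _, ?_⟩
      have hdist : dist (min η (d/2)) 0 < d := by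
        rw [Real.dist_eq, sub_zero, abs_of_pos (lt_min hη0 (half_pos hd0))]
        have := min_le_right η (d/2); linarith
      have hcc := hcd hdist
      rw [Real.dist_eq, Real.cos_zero, abs_sub_lt_iff] at hcc
      have h2 := hcc.2
      rw [lt_div_iff₀ (by positivity : (0:ℝ) < 2*g)] at h2
      nlinarith [h2]
    have hη₂π : η₂ ≤ π := by linarith [Real.pi_pos, hηle]
    -- the reference point and ball
    obtain ⟨u, hudef⟩ : ∃ x : ℝ, x = η₂/(2*g) := ⟨_, rfl⟩
    have hu0 : 0 < u := by rw [hudef]; positivity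
    obtain ⟨θs, hθsdef⟩ : ∃ θs : Fin g → ℝ, θs = fun j : Fin g => (((j:ℕ):ℝ)+1) * u := ⟨_, rfl⟩
    obtain ⟨r, hrdef⟩ : ∃ x : ℝ, x = u/4 := ⟨_, rfl⟩
    have hr0 : 0 < r := by rw [hrdef]; positivity
    obtain ⟨B, hBdef⟩ : ∃ B : Set (Fin g → ℝ), B = Metric.closedBall θs r := ⟨_, rfl⟩
    have hBd : ∀ θ ∈ B, ∀ j, |θ j - θs j| ≤ r := by
      intro θ hθ j
      rw [hBdef, Metric.mem_closedBall] at hθ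
      have := dist_le_pi_dist θ θs j
      rw [Real.dist_eq] at this
      linarith
    have hθslo : ∀ j, u ≤ θs j := by
      intro j; simp only [hθsdef]
      nlinarith [Nat.cast_nonneg (α := ℝ) (j : ℕ), hu0]
    have hθshi : ∀ j, θs j ≤ (g:ℝ)*u := by
      intro j; simp only [hθsdef]
      have hj : ((j:ℕ):ℝ) + 1 ≤ (g:ℝ) := by
        have := j.isLt; exact_mod_cast Nat.succ_le_of_lt this
      nlinarith [hu0]
    have hgu : (g:ℝ)*u = η₂/2 := by rw [hudef]; field_simp
    have hBlo : ∀ θ ∈ B, ∀ j, 0 < θ j := by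
      intro θ hθ j
      have h1 := (abs_le.1 (hBd θ hθ j)).1
      have := hθslo j
      rw [hrdef] at h1; linarith
    have hBhi : ∀ θ ∈ B, ∀ j, θ j < η₂ := by
      intro θ hθ j
      have h1 := (abs_le.1 (hBd θ hθ j)).2
      have h2 := hθshi j
      have h3 : u ≤ η₂/6 := by
        rw [hudef]
        rw [div_le_div_iff₀ (by positivity) (by norm_num)]
        nlinarith
      rw [hrdef] at h1; linarith [hgu]
    have hBΩ : B ⊆ Ω := by
      intro θ hθ
      refine Set.mem_univ_pi.2 (fun j => ⟨(hBlo θ hθ j).le, ?_⟩)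
      have := hBhi θ hθ j
      linarith [Real.pi_pos, hηle, hη₂le]
    have hBw1 : ∀ θ ∈ B, t ≤ w 1 θ := by
      intro θ hθ
      refine le_trans hcosη₂ (hW1lb θ η₂ hη₂0.le hη₂π (fun j => ⟨(hBlo θ hθ j).le, (hBhi θ hθ j).le⟩))
    have hBF : ∀ θ ∈ B, F₀/2 ≤ F θ := by
      intro θ hθ
      exact hFpos θ (fun j => ⟨(hBlo θ hθ j).le, by linarith [hBhi θ hθ j, hη₂le]⟩)
    have hBne' : ∀ θ ∈ B, ∀ i j : Fin g, i ≠ j → θ i ≠ θ j := by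
      intro θ hθ i j hij
      have hsep : u ≤ |θs i - θs j| := by
        rw [hθsdef]
        have h1 : (1:ℝ) ≤ |((i:ℕ):ℝ) - ((j:ℕ):ℝ)| := by
          have hne : ((i:ℕ):ℤ) ≠ ((j:ℕ):ℤ) := by
            simpa using (fun h => hij (Fin.ext h))
          have := Int.one_le_abs (sub_ne_zero.2 hne)
          push_cast at this ⊢
          exact_mod_cast this
        calc u = 1 * u := (one_mul u).symm
          _ ≤ |((i:ℕ):ℝ) - ((j:ℕ):ℝ)| * u := by nlinarith
          _ = |(((i:ℕ):ℝ)+1) * u - (((j:ℕ):ℝ)+1) * u| := by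
              rw [← sub_mul, abs_mul, abs_of_pos hu0]
              congr 1
              congr 1
              ring
      intro heq
      have h1 := hBd θ hθ i
      have h2 := hBd θ hθ j
      rw [hrdef] at h1 h2
      have : |θs i - θs j| ≤ u/2 := by
        have h3 : θs i - θs j = -(θ i - θs i) + (θ j - θs j) := by rw [heq]; ring
        rw [h3]
        calc |-(θ i - θs i) + (θ j - θs j)| ≤ |-(θ i - θs i)| + |θ j - θs j| := abs_add_le _ _
          _ ≤ u/4 + u/4 := add_le_add (by rwa [abs_neg]) h2
          _ = u/2 := by ring
      linarith
    have hBdens : ∀ θ ∈ B, 0 < dens θ := by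
      intro θ hθ
      rw [hdens]
      have hfac : (0:ℝ) < 1 / ((Nat.factorial g : ℝ) * Real.pi ^ g) := by positivity
      refine mul_pos (mul_pos hfac ?_) ?_
      · refine Finset.prod_pos (fun i _ => Finset.prod_pos (fun j hj => ?_))
        have hij : i ≠ j := ne_of_lt (Finset.mem_filter.1 hj).2
        have hcne : Real.cos (θ i) ≠ Real.cos (θ j) := by
          intro hc
          exact hBne' θ hθ i j hij (Real.injOn_cos
            ⟨(hBlo θ hθ i).le, by linarith [hBhi θ hθ i, hη₂le, hηle, Real.pi_pos]⟩
            ⟨(hBlo θ hθ j).le, by linarith [hBhi θ hθ j, hη₂le, hηle, Real.pi_pos]⟩ hc)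
        have : 2 * Real.cos (θ i) - 2 * Real.cos (θ j) ≠ 0 := by
          intro hc; apply hcne; linarith [sub_eq_zero.1 hc]
        positivity
      · refine Finset.prod_pos (fun i _ => ?_)
        have : 0 < Real.sin (θ i) := Real.sin_pos_of_pos_of_lt_pi (hBlo θ hθ i)
          (by linarith [hBhi θ hθ i, hη₂le, hηle, Real.pi_pos])
        positivity
    have hBcomp : IsCompact B := hBdef ▸ isCompact_closedBall θs r
    have hBnonempty : B.Nonempty := ⟨θs, hBdef ▸ Metric.mem_closedBall_self hr0.le⟩
    obtain ⟨θm, hθmB, hminOn⟩ := hBcomp.exists_isMinOn hBnonempty hdc.continuousOn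
    obtain ⟨d₀, hd₀def⟩ : ∃ x : ℝ, x = dens θm := ⟨_, rfl⟩
    have hd₀pos : 0 < d₀ := hd₀def ▸ hBdens θm hθmB
    have hd₀le : ∀ θ ∈ B, d₀ ≤ dens θ := fun θ hθ => hd₀def ▸ hminOn hθ
    obtain ⟨volB, hvolBdef⟩ : ∃ x : ℝ, x = (volume B).toReal := ⟨_, rfl⟩
    have hvolBpos : 0 < volB := by
      rw [hvolBdef]
      refine ENNReal.toReal_pos ?_ hBcomp.measure_lt_top.ne
      refine ne_of_gt (lt_of_lt_of_le (Metric.measure_ball_pos volume θs hr0) ?_)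
      rw [hBdef]
      exact measure_mono Metric.ball_subset_closedBall
    refine ⟨F₀/2 * d₀ * volB, by positivity, fun n => ?_⟩
    -- split the integral
    have hdisj : Disjoint (Ω ∩ G) (Ω \ G) :=
      Set.disjoint_sdiff_right.mono_left Set.inter_subset_right
    have hsp : (∫ θ in (Ω ∩ G) ∪ (Ω \ G), (w 1 θ)^(2*n+1) * F θ * dens θ)
        = (∫ θ in Ω ∩ G, (w 1 θ)^(2*n+1) * F θ * dens θ)
          + ∫ θ in Ω \ G, (w 1 θ)^(2*n+1) * F θ * dens θ :=
      setIntegral_union hdisj (hΩm.diff hGm) (hInt n _ Set.inter_subset_left)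
        (hInt n _ Set.diff_subset)
    rw [Set.inter_union_diff] at hsp
    -- lower bound on the good region
    have hBsubΩG : B ⊆ Ω ∩ G := by
      intro θ hθ
      refine ⟨hBΩ hθ, ?_⟩
      rw [hGdef]
      have := hBw1 θ hθ
      have : ρ ≤ w 1 θ := by linarith
      exact le_trans this (le_abs_self _)
    have hgood : (∫ θ in B, (w 1 θ)^(2*n+1) * F θ * dens θ)
        ≤ ∫ θ in Ω ∩ G, (w 1 θ)^(2*n+1) * F θ * dens θ := by
      refine setIntegral_mono_set (hInt n _ Set.inter_subset_left) ?_
        (HasSubset.Subset.eventuallyLE hBsubΩG)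
      refine (ae_restrict_iff' (hΩm.inter hGm)).2 (Filter.Eventually.of_forall ?_)
      intro θ hθ
      have h2 := hθ.2
      rw [hGdef] at h2
      exact hfGnn n θ hθ.1 h2
    have hconst : t^(2*n+1) * (F₀/2 * d₀) * volB
        ≤ ∫ θ in B, (w 1 θ)^(2*n+1) * F θ * dens θ := by
      have := setIntegral_ge_of_const_le (μ := volume) (c := t^(2*n+1) * (F₀/2 * d₀))
        (hBcomp.isClosed.measurableSet) hBcomp.measure_lt_top.ne
        (fun θ hθ => ?_) (hInt n B hBΩ)
      · rw [measureReal_def, ← hvolBdef, smul_eq_mul] at this; linarith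
      · have h1 : t^(2*n+1) ≤ (w 1 θ)^(2*n+1) := pow_le_pow_left₀ ht0.le (hBw1 θ hθ) _
        have h2 : F₀/2 ≤ F θ := hBF θ hθ
        have h3 : d₀ ≤ dens θ := hd₀le θ hθ
        have h4 : (0:ℝ) < F₀/2 := by linarith
        have h5 : 0 < dens θ := hBdens θ hθ
        have h6 : (0:ℝ) ≤ t^(2*n+1) := by positivity
        calc t^(2*n+1) * (F₀/2 * d₀) = t^(2*n+1) * (F₀/2) * d₀ := by ring
          _ ≤ (w 1 θ)^(2*n+1) * F θ * dens θ := by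
            refine mul_le_mul (mul_le_mul h1 h2 h4.le (by nlinarith)) h3 hd₀pos.le ?_
            have : (0:ℝ) ≤ (w 1 θ)^(2*n+1) := le_trans h6 h1
            nlinarith
    -- bound on the bad region
    have hbad : -(ρ^(2*n+1) * C * V) ≤ ∫ θ in Ω \ G, (w 1 θ)^(2*n+1) * F θ * dens θ := by
      have hbound : ∀ θ ∈ Ω \ G, ‖(w 1 θ)^(2*n+1) * F θ * dens θ‖ ≤ ρ^(2*n+1) * C := by
        intro θ hθ
        have hle : |w 1 θ| ≤ ρ := by
          have := hθ.2
          rw [hGdef] at this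
          simpa using le_of_not_ge (by simpa using this)
        rw [Real.norm_eq_abs, mul_assoc, abs_mul, abs_pow]
        exact mul_le_mul (pow_le_pow_left₀ (abs_nonneg _) hle _) (hCb θ hθ.1)
          (abs_nonneg _) (by positivity)
      have hnorm := norm_setIntegral_le_of_norm_le_const (μ := volume) (s := Ω \ G)
        (lt_of_le_of_lt (measure_mono Set.diff_subset) hΩc.measure_lt_top) hbound
      have hVle : ((volume (Ω \ G)).toReal) ≤ V := by
        rw [hVdef]
        exact ENNReal.toReal_mono hΩvol (measure_mono Set.diff_subset)
      have h7 : (0:ℝ) ≤ ρ^(2*n+1) * C := by positivity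
      have h8 : ‖∫ θ in Ω \ G, (w 1 θ)^(2*n+1) * F θ * dens θ‖ ≤ ρ^(2*n+1) * C * V := by
        refine le_trans hnorm ?_
        exact mul_le_mul_of_nonneg_left hVle h7
      rw [Real.norm_eq_abs] at h8
      have := (abs_le.1 h8).1
      linarith
    -- combine
    have hρK : ρ^(2*n+1) * C * V ≤ ρ^(2*n+1) * K₂ := by
      have h3 : C * V ≤ K₂ := by rw [hK₂def]; linarith
      have h4 : (0:ℝ) ≤ ρ^(2*n+1) := by positivity
      calc ρ^(2*n+1) * C * V = ρ^(2*n+1) * (C*V) := by ring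
        _ ≤ ρ^(2*n+1) * K₂ := mul_le_mul_of_nonneg_left h3 h4
    have hfinal : t^(2*n+1) * (F₀/2 * d₀ * volB) = t^(2*n+1) * (F₀/2 * d₀) * volB := by ring
    rw [hbn n, hsp]
    linarith only [hgood, hconst, hbad, hρK, hfinal]
  -- auxiliary limits
  have hNat : Tendsto (fun n : ℕ => 2*n+1) atTop atTop :=
    tendsto_atTop_atTop_of_monotone (fun a b h => by omega) (fun c => ⟨c, by omega⟩)
  have hgeo : ∀ q : ℝ, 0 ≤ q → q < 1 → Tendsto (fun n : ℕ => q^(2*n+1)) atTop (nhds 0) :=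
    fun q h0 h1 => (tendsto_pow_atTop_nhds_zero_of_lt_one h0 h1).comp hNat
  have h2gpos : (0:ℝ) < 2*g := by linarith
  -- lower estimates
  have hlow : ∀ x : ℝ, x < 2*(g:ℝ) → ∀ᶠ n in atTop, x < (b n)^((1:ℝ)/(2*(n:ℝ)+1)) ∧ 0 < b n := by
    intro x hx
    obtain ⟨t, hxt, hρt, ht2⟩ : ∃ t : ℝ, x < t ∧ ρ < t ∧ t < 2*(g:ℝ) := by
      refine ⟨max ((x+2*g)/2) ((ρ+2*g)/2), ?_, ?_, ?_⟩
      · exact lt_of_lt_of_le (by linarith) (le_max_left _ _)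
      · exact lt_of_lt_of_le (by linarith) (le_max_right _ _)
      · exact max_lt (by linarith) (by linarith)
    have ht0 : 0 < t := lt_trans hρpos hρt
    obtain ⟨t', hts, ht'2⟩ : ∃ t' : ℝ, t < t' ∧ t' < 2*(g:ℝ) :=
      ⟨(t+2*g)/2, by linarith, by linarith⟩
    have ht'0 : 0 < t' := lt_trans ht0 hts
    obtain ⟨K₁, hK₁pos, hK₁⟩ := hKey t' (lt_trans hρt hts) ht'2
    have hq1 : Tendsto (fun n : ℕ => K₂*(ρ/t')^(2*n+1) + (t/t')^(2*n+1)) atTop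
        (nhds (K₂*0+0)) :=
      ((hgeo (ρ/t') (by positivity)
          (by rw [div_lt_one ht'0]; exact lt_trans hρt hts)).const_mul K₂).add
        (hgeo (t/t') (by positivity) (by rw [div_lt_one ht'0]; exact hts))
    rw [show K₂*(0:ℝ)+0 = 0 by ring] at hq1
    have hev := hq1.eventually_lt_const hK₁pos
    filter_upwards [hev] with n hn
    have hNpos : (0:ℝ) < t'^(2*n+1) := by positivity
    have hkey2 : t^(2*n+1) ≤ t'^(2*n+1)*K₁ - ρ^(2*n+1)*K₂ := by
      have hmul := mul_le_mul_of_nonneg_left hn.le hNpos.le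
      have he : t'^(2*n+1) * (K₂*(ρ/t')^(2*n+1) + (t/t')^(2*n+1))
          = K₂*ρ^(2*n+1) + t^(2*n+1) := by
        rw [div_pow, div_pow]
        field_simp
      rw [he] at hmul
      linarith
    have hbnlow : t^(2*n+1) ≤ b n := le_trans hkey2 (by linarith [hK₁ n])
    have hbpos : 0 < b n := lt_of_lt_of_le (by positivity) hbnlow
    refine ⟨?_, hbpos⟩
    have hmono := Real.rpow_le_rpow (by positivity : (0:ℝ) ≤ t^(2*n+1)) hbnlow
      (by positivity : (0:ℝ) ≤ (1:ℝ)/(2*(n:ℝ)+1))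
    have hexp : ((2*n+1:ℕ):ℝ) * ((1:ℝ)/(2*(n:ℝ)+1)) = 1 := by
      push_cast
      rw [mul_one_div, div_self (by positivity : (2*(n:ℝ)+1) ≠ 0)]
    have hrt : ((t^(2*n+1):ℝ))^((1:ℝ)/(2*(n:ℝ)+1)) = t := by
      rw [← Real.rpow_natCast t (2*n+1), ← Real.rpow_mul ht0.le, hexp, Real.rpow_one]
    calc x < t := hxt
      _ = ((t^(2*n+1):ℝ))^((1:ℝ)/(2*(n:ℝ)+1)) := hrt.symm
      _ ≤ (b n)^((1:ℝ)/(2*(n:ℝ)+1)) := hmono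
  -- upper estimate sequence
  have hreal : Tendsto (fun n : ℕ => 2*(n:ℝ)+1) atTop atTop :=
    tendsto_atTop_add_const_right _ 1 (Tendsto.const_mul_atTop two_pos tendsto_natCast_atTop_atTop)
  have hone : Tendsto (fun n : ℕ => (1:ℝ)/(2*(n:ℝ)+1)) atTop (nhds 0) := by
    simpa [one_div, Pi.inv_def] using hreal.inv_tendsto_atTop
  have hupK : Tendsto (fun n : ℕ => 2*(g:ℝ) * K₂^((1:ℝ)/(2*(n:ℝ)+1))) atTop (nhds (2*(g:ℝ))) := by
    have h2 : Tendsto (fun n : ℕ => K₂^((1:ℝ)/(2*(n:ℝ)+1))) atTop (nhds 1) := by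
      have hK : ∀ n : ℕ, K₂^((1:ℝ)/(2*(n:ℝ)+1))
          = Real.exp (Real.log K₂ * ((1:ℝ)/(2*(n:ℝ)+1))) :=
        fun n => Real.rpow_def_of_pos hK₂pos _
      simp only [hK]
      have h3 : Tendsto (fun n : ℕ => Real.log K₂ * ((1:ℝ)/(2*(n:ℝ)+1))) atTop (nhds 0) := by
        simpa using hone.const_mul (Real.log K₂)
      have h4 := (Real.continuous_exp.tendsto 0).comp h3
      simpa [Function.comp_def] using h4
    have h5 := h2.const_mul (2*(g:ℝ))
    simpa using h5
  rw [tendsto_order]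
  constructor
  · intro x hx
    exact (hlow x hx).mono fun n hn => hn.1
  · intro x hx
    have h2 := hupK.eventually_lt_const hx
    have h3 := (hlow 0 (by linarith)).mono fun n hn => hn.2
    filter_upwards [h2, h3] with n h2n h3n
    have hle : (b n)^((1:ℝ)/(2*(n:ℝ)+1)) ≤ ((2*(g:ℝ))^(2*n+1)*K₂)^((1:ℝ)/(2*(n:ℝ)+1)) :=
      Real.rpow_le_rpow h3n.le (hUpper n) (by positivity)
    have hexp : ((2*n+1:ℕ):ℝ) * ((1:ℝ)/(2*(n:ℝ)+1)) = 1 := by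
      push_cast
      rw [mul_one_div, div_self (by positivity : (2*(n:ℝ)+1) ≠ 0)]
    have heq : ((2*(g:ℝ))^(2*n+1)*K₂)^((1:ℝ)/(2*(n:ℝ)+1))
        = 2*(g:ℝ) * K₂^((1:ℝ)/(2*(n:ℝ)+1)) := by
      rw [Real.mul_rpow (by positivity) hK₂pos.le]
      congr 1
      rw [← Real.rpow_natCast (2*(g:ℝ)) (2*n+1), ← Real.rpow_mul (by positivity), hexp,
        Real.rpow_one]
    rw [heq] at hle
    exact lt_of_le_of_lt hle h2n
end
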